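/- The truncated secondary Hochschild complex (C^•(A,B,ε), b') is acyclic: the maps s_n : C^n(A,B,ε) → C^{n-1}(A,B,ε) defined by (s_n f)(T) = (−1)^{n-1} f(T extended by appending the unit 1 ∈ A as a new last diagonal entry and 1 ∈ B in all new off-diagonal positions) form a contracting homotopy, i.e., s_{n+1} b'_n + b'_{n-1} s_n = id on C^n(A,B,ε). -/

import Mathlib

open scoped TensorProduct
open MulOpposite PiTensorProduct

noncomputable section

/-- Index set for the strictly upper triangular positions of an `m × m` matrix. -/
abbrev UT (m : ℕ) := {p : Fin m × Fin m // p.1 < p.2}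

/-- The tensor space `A^{⊗ m} ⊗ B^{⊗ m(m-1)/2}` in its matrix representation. -/
def TS (k A B : Type) [Field k] [Ring A] [Algebra k A] [CommRing B] [Algebra k B]
    (m : ℕ) : Type :=
  (⨂[k] _ : Fin m, A) ⊗[k] (⨂[k] _ : UT m, B)

variable (k A B : Type) [Field k] [Ring A] [Algebra k A] [CommRing B] [Algebra k B]

instance (m : ℕ) : AddCommGroup (TS k A B m) :=
  inferInstanceAs (AddCommGroup ((⨂[k] _ : Fin m, A) ⊗[k] (⨂[k] _ : UT m, B)))

instance (m : ℕ) : Module k (TS k A B m) :=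
  inferInstanceAs (Module k ((⨂[k] _ : Fin m, A) ⊗[k] (⨂[k] _ : UT m, B)))

/-- The secondary Hochschild cochain space `C^n(A,B,ε) = Hom_k(A^{⊗(n+1)} ⊗ B^{⊗ n(n+1)/2}, k)`. -/
abbrev Cc (n : ℕ) : Type := TS k A B (n + 1) →ₗ[k] k

/-- The pure tensor (generator) determined by diagonal entries `a` and
upper-triangular entries `β` (read at indices `< m`). -/
def gen (m : ℕ) (a : ℕ → A) (β : ℕ → ℕ → B) : TS k A B m :=
  (tprod k fun i : Fin m => a i) ⊗ₜ[k] (tprod k fun p : UT m => β p.1.1 p.1.2)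

/-- Diagonal of the matrix obtained by merging diagonal entries `i`, `i+1` via
`a_i a_{i+1} ε(b_{i,i+1})`. -/
def mergeA (ε : B →ₐ[k] A) (i : ℕ) (a : ℕ → A) (β : ℕ → ℕ → B) : ℕ → A :=
  fun j => if j < i then a j else if j = i then a i * a (i + 1) * ε (β i (i + 1)) else a (j + 1)

/-- Preimages of the index `p` under the monotone surjection collapsing `i` and `i+1`. -/
def preim (i p : ℕ) : Finset ℕ :=
  if p < i then {p} else if p = i then {i, i + 1} else {p + 1}

/-- `B`-entries of the matrix obtained by merging rows/columns `i` and `i+1`. -/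
def mergeB (i : ℕ) (β : ℕ → ℕ → B) : ℕ → ℕ → B :=
  fun p q => ∏ u ∈ preim i p, ∏ v ∈ preim i q, β u v

/-- Diagonal of the "cyclic merge": `a_m a_0 ε(b_{0,m})` in position `0`
(top index `m`). -/
def cmergeA (ε : B →ₐ[k] A) (m : ℕ) (a : ℕ → A) (β : ℕ → ℕ → B) : ℕ → A :=
  fun j => if j = 0 then a m * a 0 * ε (β 0 m) else a j

/-- `B`-entries of the cyclic merge: first row becomes `b_{q,m} b_{0,q}`. -/
def cmergeB (m : ℕ) (β : ℕ → ℕ → B) : ℕ → ℕ → B :=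
  fun p q => if p = 0 then β q m * β 0 q else β p q

/-- Diagonal of the cyclically rotated matrix: `a_n` moves to position `0`. -/
def rotA (n : ℕ) (a : ℕ → A) : ℕ → A :=
  fun j => if j = 0 then a n else a (j - 1)

/-- `B`-entries of the cyclically rotated matrix: the first row becomes
`b_{0,n}, …, b_{n-1,n}`. -/
def rotB (n : ℕ) (β : ℕ → ℕ → B) : ℕ → ℕ → B :=
  fun p q => if p = 0 then β (q - 1) n else β (p - 1) (q - 1)

/-!
STATEMENT 7: the truncated secondary Hochschild complex `(C^•(A,B,ε), b')` is acyclic: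
the maps `s_n` (extension of the matrix by a last diagonal entry `1 ∈ A` and entries
`1 ∈ B`, with sign) form a contracting homotopy: `s_{n+1} b'_n + b'_{n-1} s_n = id` on
`C^n(A,B,ε)`.  Here `s n : C^{n+1} → C^n` plays the role of the paper's `s_{n+1}`.
-/

/-- Extend a diagonal family by `1` beyond index `n`. -/
def extA {A : Type} [One A] (n : ℕ) (a : ℕ → A) : ℕ → A :=
  fun j => if j < n then a j else 1

/-- Extend an off-diagonal family by `1` beyond column `n`. -/
def extB {B : Type} [One B] (n : ℕ) (β : ℕ → ℕ → B) : ℕ → ℕ → B :=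
  fun p q => if q < n then β p q else 1

lemma preim_le {i q v : ℕ} (h : v ∈ preim i q) : v ≤ q + 1 := by
  unfold preim at h
  split_ifs at h <;> simp_all [Finset.mem_insert] <;> omega

lemma gen_congr {m : ℕ} {a a' : ℕ → A} {β β' : ℕ → ℕ → B}
    (ha : ∀ j, j < m → a j = a' j)
    (hβ : ∀ p q, p < q → q < m → β p q = β' p q) :
    gen k A B m a β = gen k A B m a' β' := by
  unfold gen
  have h1 : (fun i : Fin m => a i) = fun i : Fin m => a' i :=
    funext fun i => ha i.1 i.isLt
  have h2 : (fun p : UT m => β p.1.1 p.1.2) = fun p : UT m => β' p.1.1 p.1.2 :=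
    funext fun p => hβ p.1.1.1 p.1.2.1 p.2 p.1.2.isLt
  rw [h1, h2]

lemma ext_of_gen {m : ℕ} {F G : TS k A B m →ₗ[k] k}
    (h : ∀ a β, F (gen k A B m a β) = G (gen k A B m a β)) : F = G := by
  have key : ∀ (f : Fin m → A) (g : UT m → B),
      F ((tprod k f) ⊗ₜ[k] (tprod k g)) = G ((tprod k f) ⊗ₜ[k] (tprod k g)) := by
    intro f g
    have hg : gen k A B m (fun j => if hj : j < m then f ⟨j, hj⟩ else 1)
        (fun p q => if hpq : p < q ∧ q < m then
          g ⟨(⟨p, lt_trans hpq.1 hpq.2⟩, ⟨q, hpq.2⟩), hpq.1⟩ else 1) =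
        (tprod k f) ⊗ₜ[k] (tprod k g) := by
      unfold gen
      congr 1
      · exact congrArg _ (funext fun i => by simp [i.isLt])
      · refine congrArg _ (funext fun p => ?_)
        have h1 : (p.1.1 : ℕ) < p.1.2 := p.2
        beta_reduce
        rw [dif_pos ⟨h1, p.1.2.isLt⟩]
    have := h (fun j => if hj : j < m then f ⟨j, hj⟩ else 1)
      (fun p q => if hpq : p < q ∧ q < m then
          g ⟨(⟨p, lt_trans hpq.1 hpq.2⟩, ⟨q, hpq.2⟩), hpq.1⟩ else 1)
    rwa [hg] at this
  apply TensorProduct.ext'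
  intro x y
  induction x using PiTensorProduct.induction_on with
  | smul_tprod r f =>
    rw [← TensorProduct.smul_tmul']
    erw [map_smul, map_smul]
    congr 1
    induction y using PiTensorProduct.induction_on with
    | smul_tprod r' g =>
      rw [TensorProduct.tmul_smul]
      erw [map_smul, map_smul]
      exact congrArg (fun z => r' • z) (key f g)
    | add u v hu hv =>
      rw [TensorProduct.tmul_add]
      erw [map_add, map_add, hu, hv]
  | add u v hu hv =>
    rw [TensorProduct.add_tmul]
    erw [map_add, map_add, hu, hv]

theorem secondary_truncated_complex_contracting_homotopy
    (ε : B →ₐ[k] A) (hcent : ∀ (b : B) (a : A), ε b * a = a * ε b)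
    (btr : ∀ n : ℕ, Cc k A B n →ₗ[k] Cc k A B (n + 1))
    (hbtr : ∀ (n : ℕ) (φ : Cc k A B n) (a : ℕ → A) (β : ℕ → ℕ → B),
      btr n φ (gen k A B (n + 2) a β) =
        ∑ i ∈ Finset.range (n + 1), (-1 : ℤ) ^ i •
            φ (gen k A B (n + 1) (mergeA k A B ε i a β) (mergeB B i β)))
    (s : ∀ n : ℕ, Cc k A B (n + 1) →ₗ[k] Cc k A B n)
    (hs : ∀ (n : ℕ) (φ : Cc k A B (n + 1)) (a : ℕ → A) (β : ℕ → ℕ → B),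
      s n φ (gen k A B (n + 1) a β) =
        (-1 : ℤ) ^ n • φ (gen k A B (n + 2)
          (fun j => if j < n + 1 then a j else 1)
          (fun p q => if q < n + 1 then β p q else 1))) :
    ∀ (n : ℕ) (φ : Cc k A B (n + 1)),
      s (n + 1) (btr (n + 1) φ) + btr n (s n φ) = φ := by
  intro n φ
  refine ext_of_gen k A B ?_
  intro a β
  show s (n + 1) (btr (n + 1) φ) (gen k A B (n + 2) a β)
      + btr n (s n φ) (gen k A B (n + 2) a β) = φ (gen k A B (n + 2) a β)
  have h1 : s (n + 1) (btr (n + 1) φ) (gen k A B (n + 2) a β) =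
      (-1 : ℤ) ^ (n + 1) • (btr (n + 1) φ)
        (gen k A B (n + 3) (extA (n + 2) a) (extB (n + 2) β)) :=
    hs (n + 1) (btr (n + 1) φ) a β
  have h2 : btr (n + 1) φ (gen k A B (n + 3) (extA (n + 2) a) (extB (n + 2) β)) =
      ∑ i ∈ Finset.range (n + 2), (-1 : ℤ) ^ i •
        φ (gen k A B (n + 2) (mergeA k A B ε i (extA (n + 2) a) (extB (n + 2) β))
            (mergeB B i (extB (n + 2) β))) :=
    hbtr (n + 1) φ (extA (n + 2) a) (extB (n + 2) β)
  have h3 : btr n (s n φ) (gen k A B (n + 2) a β) =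
      ∑ i ∈ Finset.range (n + 1), (-1 : ℤ) ^ i •
        (s n φ) (gen k A B (n + 1) (mergeA k A B ε i a β) (mergeB B i β)) :=
    hbtr n (s n φ) a β
  have h4 : ∀ i : ℕ,
      (s n φ) (gen k A B (n + 1) (mergeA k A B ε i a β) (mergeB B i β)) =
      (-1 : ℤ) ^ n • φ (gen k A B (n + 2) (extA (n + 1) (mergeA k A B ε i a β))
          (extB (n + 1) (mergeB B i β))) :=
    fun i => hs n φ (mergeA k A B ε i a β) (mergeB B i β)
  have key1 : ∀ i : ℕ, i < n + 1 →
      gen k A B (n + 2) (mergeA k A B ε i (extA (n + 2) a) (extB (n + 2) β))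
          (mergeB B i (extB (n + 2) β)) =
      gen k A B (n + 2) (extA (n + 1) (mergeA k A B ε i a β))
          (extB (n + 1) (mergeB B i β)) := by
    intro i hi
    apply gen_congr
    · intro j hj
      simp only [extA, extB, mergeA]
      split_ifs <;> try (exfalso; omega)
      all_goals try simp only [_root_.map_one, mul_one, one_mul]
      all_goals first | rfl | (exfalso; omega) | (subst_vars; rfl) | (subst_vars; exfalso; omega)
    · intro p q hpq hq
      by_cases hq1 : q < n + 1
      · unfold extB mergeB
        simp only [if_pos hq1]
        refine Finset.prod_congr rfl fun u hu => Finset.prod_congr rfl fun v hv => ?_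
        have hv1 := preim_le hv
        simp only [if_pos (show v < n + 2 by omega)]
      · have hq2 : q = n + 1 := by omega
        subst hq2
        unfold extB mergeB
        simp only [if_neg (lt_irrefl (n + 1))]
        have hpre : preim i (n + 1) = {n + 2} := by
          unfold preim
          rw [if_neg (by omega), if_neg (by omega)]
        rw [hpre]
        refine Finset.prod_eq_one fun u hu => ?_
        rw [Finset.prod_singleton]
        simp only [if_neg (show ¬ (n + 2 < n + 2) by omega)]
  have key2 :
      gen k A B (n + 2) (mergeA k A B ε (n + 1) (extA (n + 2) a) (extB (n + 2) β))
          (mergeB B (n + 1) (extB (n + 2) β)) =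
      gen k A B (n + 2) a β := by
    apply gen_congr
    · intro j hj
      simp only [mergeA, extA, extB]
      split_ifs <;> try (exfalso; omega)
      all_goals try simp only [_root_.map_one, mul_one, one_mul]
      all_goals first | rfl | (exfalso; omega) | (subst_vars; rfl) | (subst_vars; exfalso; omega)
    · intro p q hpq hq
      unfold mergeB extB
      have hp : preim (n + 1) p = {p} := by
        unfold preim; rw [if_pos (by omega)]
      rw [hp, Finset.prod_singleton]
      by_cases h1 : q < n + 1
      · have hq' : preim (n + 1) q = {q} := by
          unfold preim; rw [if_pos h1]
        rw [hq', Finset.prod_singleton]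
        simp only [if_pos (show q < n + 2 by omega)]
      · have hq2 : q = n + 1 := by omega
        subst hq2
        have hq' : preim (n + 1) (n + 1) = {n + 1, n + 1 + 1} := by
          unfold preim; rw [if_neg (lt_irrefl _), if_pos rfl]
        rw [hq', Finset.prod_pair (by omega)]
        simp only [if_pos (show n + 1 < n + 2 by omega),
          if_neg (show ¬ (n + 1 + 1 < n + 2) by omega), mul_one]
  rw [h1, h2, h3]
  simp_rw [h4]
  rw [Finset.sum_range_succ, key2]
  rw [Finset.sum_congr rfl (fun i hi => by
    rw [key1 i (Finset.mem_range.mp hi)])]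
  rw [smul_add, Finset.smul_sum]
  simp only [smul_smul]
  rw [add_right_comm, ← Finset.sum_add_distrib]
  have hz : (∑ i ∈ Finset.range (n + 1),
      (((-1 : ℤ) ^ (n + 1) * (-1) ^ i) •
          φ (gen k A B (n + 2) (extA (n + 1) (mergeA k A B ε i a β))
              (extB (n + 1) (mergeB B i β))) +
        ((-1 : ℤ) ^ i * (-1) ^ n) •
          φ (gen k A B (n + 2) (extA (n + 1) (mergeA k A B ε i a β))
              (extB (n + 1) (mergeB B i β))))) = 0 := by
    refine Finset.sum_eq_zero fun i _ => ?_
    rw [← add_smul]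
    have hc : ((-1 : ℤ) ^ (n + 1) * (-1) ^ i + (-1) ^ i * (-1) ^ n) = 0 := by
      rw [pow_succ]; ring
    rw [hc, zero_smul]
  rw [hz, zero_add, ← pow_add]
  have he : (-1 : ℤ) ^ (n + 1 + (n + 1)) = 1 := Even.neg_one_pow ⟨n + 1, rfl⟩
  rw [he, one_smul]

end
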